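/- (Theorem 3: bias of the doubly robust estimator when both models are misspecified.) Under no unmeasured confounding and the stated overlap conditions, the probability limit of the DR estimator minus the average causal effect equals E[(T·Y − (T − e*(X))·μ1*(X))/e*(X)] − E[((1−T)·Y + (T − e*(X))·μ0*(X))/(1−e*(X))] − Δ = E[((e(X) − e*(X))·(μ1(X) − μ1*(X)))/e*(X)] + E[((e(X) − e*(X))·(μ0(X) − μ0*(X)))/(1 − e*(X))]. -/

import Mathlib

open MeasureTheory ProbabilityTheory
lemma aux_condExpKernel_null {Ω : Type*} {m : MeasurableSpace Ω}
    [mΩ : MeasurableSpace Ω] [StandardBorelSpace Ω]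
    (hm : m ≤ mΩ) (μ : Measure Ω) [IsFiniteMeasure μ]
    {N : Set Ω} (hN : μ N = 0) :
    ∀ᵐ ω ∂μ, condExpKernel μ m ω N = 0 := by
  set N' := toMeasurable μ N with hN'def
  have hN'meas : MeasurableSet N' := measurableSet_toMeasurable μ N
  have hμN' : μ N' = 0 := by rwa [measure_toMeasurable]
  have h1 : (fun ω ↦ (condExpKernel μ m ω N').toReal) =ᵐ[μ] μ⟦N' | m⟧ :=
    condExpKernel_ae_eq_condExp hm hN'meas
  have hind : (N'.indicator (fun _ => (1:ℝ))) =ᵐ[μ] (0 : Ω → ℝ) := by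
    have : ∀ᵐ ω ∂μ, ω ∉ N' := by
      rw [ae_iff]; simpa using hμN'
    filter_upwards [this] with ω hω
    simp [Set.indicator_of_notMem hω]
  have h2 : (μ⟦N' | m⟧) =ᵐ[μ] (0 : Ω → ℝ) := by
    calc (μ⟦N' | m⟧) =ᵐ[μ] μ[(0 : Ω → ℝ) | m] := condExp_congr_ae hind
    _ = 0 := condExp_zero
  filter_upwards [h1, h2] with ω hω1 hω2
  have hfin : condExpKernel μ m ω N' ≠ ⊤ := measure_ne_top _ _
  have hzero : condExpKernel μ m ω N' = 0 := by
    have := hω1.trans hω2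
    simpa [ENNReal.toReal_eq_zero_iff, hfin] using this
  exact le_antisymm (hzero ▸ measure_mono (subset_toMeasurable μ N)) (zero_le)
lemma aux_measure_eq_of_symmDiff {Ω : Type*} [MeasurableSpace Ω] (κ : Measure Ω)
    {A B N : Set Ω} (hN : κ N = 0) (hAB : ∀ ω, (ω ∈ A ∧ ω ∉ B) ∨ (ω ∈ B ∧ ω ∉ A) → ω ∈ N) :
    κ A = κ B := by
  refine measure_congr ?_
  rw [MeasureTheory.ae_eq_set]
  constructor
  · exact measure_mono_null (fun ω hω => hAB ω (Or.inl ⟨hω.1, hω.2⟩)) hN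
  · exact measure_mono_null (fun ω hω => hAB ω (Or.inr ⟨hω.1, hω.2⟩)) hN

lemma aux_condIndep_sets {Ω : Type*} {m : MeasurableSpace Ω}
    [mΩ : MeasurableSpace Ω] [StandardBorelSpace Ω]
    (hm : m ≤ mΩ) (μ : Measure Ω) [IsProbabilityMeasure μ]
    {f g f' g' : Ω → ℝ} (hfg : CondIndepFun m hm f g μ)
    (hf' : Measurable f') (hg' : Measurable g')
    (hff' : f =ᵐ[μ] f') (hgg' : g =ᵐ[μ] g')
    {s t : Set ℝ} (hs : MeasurableSet s) (ht : MeasurableSet t) :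
    (μ⟦f' ⁻¹' s ∩ g' ⁻¹' t | m⟧)
      =ᵐ[μ] fun ω => (μ⟦f' ⁻¹' s | m⟧) ω * (μ⟦g' ⁻¹' t | m⟧) ω := by
  have hk : ∀ᵐ ω ∂(μ.trim hm),
      condExpKernel μ m ω (f ⁻¹' s ∩ g ⁻¹' t)
        = condExpKernel μ m ω (f ⁻¹' s) * condExpKernel μ m ω (g ⁻¹' t) :=
    hfg (f ⁻¹' s) (g ⁻¹' t) ⟨s, hs, rfl⟩ ⟨t, ht, rfl⟩
  have hk' : ∀ᵐ ω ∂μ,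
      condExpKernel μ m ω (f ⁻¹' s ∩ g ⁻¹' t)
        = condExpKernel μ m ω (f ⁻¹' s) * condExpKernel μ m ω (g ⁻¹' t) :=
    ae_of_ae_trim hm hk
  -- the null set where f ≠ f' or g ≠ g'
  set N : Set Ω := {ω | f ω ≠ f' ω} ∪ {ω | g ω ≠ g' ω} with hNdef
  have hNnull : μ N = 0 := by
    have h1 : μ {ω | f ω ≠ f' ω} = 0 := by simpa using ae_iff.mp hff'
    have h2 : μ {ω | g ω ≠ g' ω} = 0 := by simpa using ae_iff.mp hgg'
    exact le_antisymm (le_trans (measure_union_le _ _) (by simp [h1, h2])) (zero_le)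
  have hκN : ∀ᵐ ω ∂μ, condExpKernel μ m ω N = 0 := aux_condExpKernel_null hm μ hNnull
  have hk'' : ∀ᵐ ω ∂μ,
      condExpKernel μ m ω (f' ⁻¹' s ∩ g' ⁻¹' t)
        = condExpKernel μ m ω (f' ⁻¹' s) * condExpKernel μ m ω (g' ⁻¹' t) := by
    filter_upwards [hk', hκN] with ω hω hωN
    have e1 : condExpKernel μ m ω (f' ⁻¹' s) = condExpKernel μ m ω (f ⁻¹' s) := by
      refine aux_measure_eq_of_symmDiff _ hωN fun x hx => ?_
      rcases hx with ⟨h1, h2⟩ | ⟨h1, h2⟩ <;>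
        exact Or.inl (fun hfx => (by simp_all [Set.mem_preimage] : False))
    have e2 : condExpKernel μ m ω (g' ⁻¹' t) = condExpKernel μ m ω (g ⁻¹' t) := by
      refine aux_measure_eq_of_symmDiff _ hωN fun x hx => ?_
      rcases hx with ⟨h1, h2⟩ | ⟨h1, h2⟩ <;>
        exact Or.inr (fun hgx => (by simp_all [Set.mem_preimage] : False))
    have e3 : condExpKernel μ m ω (f' ⁻¹' s ∩ g' ⁻¹' t)
        = condExpKernel μ m ω (f ⁻¹' s ∩ g ⁻¹' t) := by
      refine aux_measure_eq_of_symmDiff _ hωN fun x hx => ?_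
      rcases hx with ⟨⟨h1, h2⟩, h3⟩ | ⟨⟨h1, h2⟩, h3⟩ <;>
      · by_cases hfx : f x = f' x
        · refine Or.inr fun hgx => ?_
          simp only [Set.mem_inter_iff, Set.mem_preimage, not_and] at h3
          first
          | exact h3 (by rwa [hfx]) (by rwa [hgx])
          | exact h3 (by rwa [← hfx]) (by rwa [← hgx])
        · exact Or.inl hfx
    rw [e1, e2, e3, hω]
  -- convert to conditional expectations
  have c1 := condExpKernel_ae_eq_condExp (μ := μ) hm ((hf' hs).inter (hg' ht))
  have c2 := condExpKernel_ae_eq_condExp (μ := μ) hm (hf' hs)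
  have c3 := condExpKernel_ae_eq_condExp (μ := μ) hm (hg' ht)
  filter_upwards [hk'', c1, c2, c3] with ω h0 h1 h2 h3
  rw [← h1, ← h2, ← h3, measureReal_def, measureReal_def, measureReal_def, h0, ENNReal.toReal_mul]
/-- The σ-algebra generated by `m` and a real random variable `f`. -/
def mSup {Ω : Type*} (m : MeasurableSpace Ω) (f : Ω → ℝ) : MeasurableSpace Ω :=
  m ⊔ MeasurableSpace.comap f inferInstance

lemma aux_condExp_indicator_mul {Ω : Type*} {m : MeasurableSpace Ω}
    [mΩ : MeasurableSpace Ω]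
    (hm : m ≤ mΩ) (μ : Measure Ω) [IsProbabilityMeasure μ]
    {f : Ω → ℝ} (hfm : Measurable f) (hfi : Integrable f μ)
    {A : Set Ω} (hA : MeasurableSet A)
    (hi : ∀ s : Set ℝ, MeasurableSet s →
      (μ⟦f ⁻¹' s ∩ A | m⟧) =ᵐ[μ] fun ω => (μ⟦f ⁻¹' s | m⟧) ω * (μ⟦A | m⟧) ω) :
    μ[A.indicator f | m] =ᵐ[μ] fun ω => (μ[f | m]) ω * (μ⟦A | m⟧) ω := by
  have hm'' : mSup m f ≤ mΩ := sup_le hm hfm.comap_le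
  have hle1 : m ≤ mSup m f := le_sup_left
  have hle2 : MeasurableSpace.comap f inferInstance ≤ mSup m f := le_sup_right
  have hiA_int : Integrable (A.indicator fun _ => (1:ℝ)) μ :=
    (integrable_const (1:ℝ)).indicator hA
  -- Step 1: E[1_A | m ⊔ σ(f)] = E[1_A | m] a.e.
  have step1 : (μ⟦A | m⟧) =ᵐ[μ] μ[A.indicator (fun _ => (1:ℝ)) | mSup m f] := by
    have key : ∀ s : Set Ω, MeasurableSet[mSup m f] s →
        ∫ x in s, (μ⟦A | m⟧) x ∂μ = ∫ x in s, A.indicator (fun _ => (1:ℝ)) x ∂μ := by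
      have h_eq : mSup m f = MeasurableSpace.generateFrom {u | ∃ s₁, MeasurableSet[m] s₁ ∧
          ∃ s₂ : Set ℝ, MeasurableSet s₂ ∧ u = s₁ ∩ f ⁻¹' s₂} := by
        refine le_antisymm (sup_le ?_ ?_) (MeasurableSpace.generateFrom_le ?_)
        · intro u hu
          exact MeasurableSpace.measurableSet_generateFrom
            ⟨u, hu, Set.univ, MeasurableSet.univ, by simp⟩
        · rintro u ⟨s₂, hs₂, rfl⟩
          exact MeasurableSpace.measurableSet_generateFrom
            ⟨Set.univ, MeasurableSet.univ, s₂, hs₂, by simp⟩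
        · rintro u ⟨s₁, hs₁, s₂, hs₂, rfl⟩
          exact MeasurableSet.inter (hle1 _ hs₁) (hle2 _ ⟨s₂, hs₂, rfl⟩)
      have h_pi : IsPiSystem {u | ∃ s₁, MeasurableSet[m] s₁ ∧
          ∃ s₂ : Set ℝ, MeasurableSet s₂ ∧ u = s₁ ∩ f ⁻¹' s₂} := by
        rintro u ⟨s₁, hs₁, s₂, hs₂, rfl⟩ v ⟨t₁, ht₁, t₂, ht₂, rfl⟩ -
        refine ⟨s₁ ∩ t₁, hs₁.inter ht₁, s₂ ∩ t₂, hs₂.inter ht₂, ?_⟩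
        ext x
        simp only [Set.mem_inter_iff, Set.mem_preimage]
        tauto
      intro s hs
      refine MeasurableSpace.induction_on_inter (m := mSup m f) (C := fun u _ =>
        ∫ x in u, (μ⟦A | m⟧) x ∂μ = ∫ x in u, A.indicator (fun _ => (1:ℝ)) x ∂μ)
        h_eq h_pi (by simp) ?_ ?_ ?_ s hs
      · -- base case
        rintro u ⟨s₁, hs₁, s₂, hs₂, rfl⟩
        have hfs₂ : MeasurableSet (f ⁻¹' s₂) := hfm hs₂
        have hind2_int : Integrable ((f ⁻¹' s₂).indicator fun _ => (1:ℝ)) μ :=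
          (integrable_const (1:ℝ)).indicator hfs₂
        have hprod_int : Integrable ((μ⟦A | m⟧) * (f ⁻¹' s₂).indicator fun _ => (1:ℝ)) μ := by
          refine Integrable.mono'
            (integrable_condExp (m := m) (μ := μ) (f := A.indicator fun _ => (1:ℝ))).abs
            ((stronglyMeasurable_condExp.mono hm).aestronglyMeasurable.mul
              ((stronglyMeasurable_const.indicator hfs₂).aestronglyMeasurable)) ?_
          refine Filter.Eventually.of_forall fun x => ?_
          simp only [Pi.mul_apply, norm_mul, Real.norm_eq_abs]
          by_cases hx : x ∈ f ⁻¹' s₂ <;>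
            simp [Set.indicator_of_mem, Set.indicator_of_notMem, hx, abs_nonneg]
        have key2 : ∀ x, ((f ⁻¹' s₂).indicator (fun _ => (1:ℝ))) x * ((μ⟦A | m⟧) x)
            = ((f ⁻¹' s₂).indicator (μ⟦A | m⟧)) x := by
          intro x
          by_cases hx : x ∈ f ⁻¹' s₂ <;> simp [hx]
        calc ∫ x in s₁ ∩ f ⁻¹' s₂, (μ⟦A | m⟧) x ∂μ
            = ∫ x in s₁, ((f ⁻¹' s₂).indicator (μ⟦A | m⟧)) x ∂μ := by
              rw [setIntegral_indicator hfs₂]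
          _ = ∫ x in s₁, ((μ⟦A | m⟧) * (f ⁻¹' s₂).indicator fun _ => (1:ℝ)) x ∂μ := by
              refine setIntegral_congr_ae (hm _ hs₁) (Filter.Eventually.of_forall fun x _ => ?_)
              rw [← key2 x, Pi.mul_apply, mul_comm]
          _ = ∫ x in s₁, (μ[(μ⟦A | m⟧) * (f ⁻¹' s₂).indicator fun _ => (1:ℝ) | m]) x ∂μ := by
              rw [setIntegral_condExp hm hprod_int hs₁]
          _ = ∫ x in s₁, (μ⟦f ⁻¹' s₂ ∩ A | m⟧) x ∂μ := by
              refine setIntegral_congr_ae (hm _ hs₁) ?_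
              have hmul := condExp_mul_of_stronglyMeasurable_left (m := m) (μ := μ)
                stronglyMeasurable_condExp hprod_int hind2_int
              filter_upwards [hmul, hi s₂ hs₂] with x hx1 hx2
              intro _
              rw [hx1, hx2, Pi.mul_apply, mul_comm]
          _ = ∫ x in s₁, ((f ⁻¹' s₂ ∩ A).indicator fun _ => (1:ℝ)) x ∂μ := by
              rw [setIntegral_condExp hm ((integrable_const (1:ℝ)).indicator (hfs₂.inter hA)) hs₁]
          _ = ∫ x in s₁, ((f ⁻¹' s₂).indicator (A.indicator fun _ => (1:ℝ))) x ∂μ := by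
              rw [Set.indicator_indicator]
          _ = ∫ x in s₁ ∩ f ⁻¹' s₂, A.indicator (fun _ => (1:ℝ)) x ∂μ := by
              rw [setIntegral_indicator hfs₂]
      · -- complement
        intro u hu h
        have hu' : MeasurableSet u := hm'' _ hu
        have e1 := integral_add_compl hu' (integrable_condExp (f := A.indicator fun _ => (1:ℝ))
          (m := m) (μ := μ))
        have e2 := integral_add_compl hu' hiA_int
        have e3 : ∫ x, (μ⟦A | m⟧) x ∂μ = ∫ x, A.indicator (fun _ => (1:ℝ)) x ∂μ :=
          integral_condExp hm
        linarith
      · -- disjoint union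
        intro u hdisj humeas h
        have hmeas' : ∀ i, MeasurableSet (u i) := fun i => hm'' _ (humeas i)
        rw [integral_iUnion hmeas' hdisj integrable_condExp.integrableOn,
          integral_iUnion hmeas' hdisj hiA_int.integrableOn]
        exact tsum_congr h
    exact ae_eq_condExp_of_forall_setIntegral_eq hm'' hiA_int
      (fun s _ _ => integrable_condExp.integrableOn) (fun s hs _ => key s hs)
      ((stronglyMeasurable_condExp.mono hle1).aestronglyMeasurable)
  -- Step 2
  have hsm'' : StronglyMeasurable[mSup m f] f :=
    Measurable.stronglyMeasurable (fun s hs => hle2 _ ⟨s, hs, rfl⟩)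
  have hfiA : Integrable (f * A.indicator fun _ => (1:ℝ)) μ := by
    refine Integrable.mono' hfi.abs
      (hfi.aestronglyMeasurable.mul hiA_int.aestronglyMeasurable)
      (Filter.Eventually.of_forall fun x => ?_)
    simp only [Pi.mul_apply, norm_mul, Real.norm_eq_abs]
    by_cases hx : x ∈ A <;> simp [hx, abs_nonneg]
  have h2 : μ[f * A.indicator (fun _ => (1:ℝ)) | mSup m f]
      =ᵐ[μ] f * μ[A.indicator (fun _ => (1:ℝ)) | mSup m f] :=
    condExp_mul_of_stronglyMeasurable_left hsm'' hfiA hiA_int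
  have h3 : f * μ[A.indicator (fun _ => (1:ℝ)) | mSup m f] =ᵐ[μ] (μ⟦A | m⟧) * f := by
    filter_upwards [step1] with ω hω
    simp only [Pi.mul_apply, ← hω, mul_comm]
  have hwA_bdd : ∀ᵐ ω ∂μ, |(μ⟦A | m⟧) ω| ≤ 1 := by
    have h0 : (0 : Ω → ℝ) ≤ᵐ[μ] μ⟦A | m⟧ :=
      condExp_nonneg (Filter.Eventually.of_forall fun x => Set.indicator_nonneg
        (fun _ _ => zero_le_one) x)
    have h1 : (μ⟦A | m⟧) ≤ᵐ[μ] fun _ => (1:ℝ) := by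
      have := condExp_mono (μ := μ) (m := m) hiA_int (integrable_const (1:ℝ))
        (Filter.Eventually.of_forall fun x => Set.indicator_le_self' (fun _ _ => zero_le_one) x)
      filter_upwards [this] with ω hω
      calc (μ⟦A | m⟧) ω ≤ (μ[(fun _ => (1:ℝ)) | m]) ω := hω
      _ = 1 := by rw [condExp_const hm]
    filter_upwards [h0, h1] with ω h0 h1
    have h0' : (0:ℝ) ≤ (μ⟦A | m⟧) ω := by simpa using h0
    rw [abs_le]; exact ⟨by linarith, h1⟩
  have hwf_int : Integrable ((μ⟦A | m⟧) * f) μ := by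
    refine Integrable.mono' hfi.abs
      ((stronglyMeasurable_condExp.mono hm).aestronglyMeasurable.mul hfi.aestronglyMeasurable)
      ?_
    filter_upwards [hwA_bdd] with ω hω
    simp only [Pi.mul_apply, norm_mul, Real.norm_eq_abs]
    calc |(μ⟦A | m⟧) ω| * |f ω| ≤ 1 * |f ω| :=
      mul_le_mul_of_nonneg_right hω (abs_nonneg _)
    _ = |f ω| := one_mul _
  have h4 : μ[(μ⟦A | m⟧) * f | m] =ᵐ[μ] (μ⟦A | m⟧) * μ[f | m] :=
    condExp_mul_of_stronglyMeasurable_left stronglyMeasurable_condExp hwf_int hfi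
  have h5 : μ[f * A.indicator (fun _ => (1:ℝ)) | m]
      =ᵐ[μ] μ[μ[f * A.indicator (fun _ => (1:ℝ)) | mSup m f] | m] :=
    (condExp_condExp_of_le hle1 hm'').symm
  have hAf : A.indicator f = f * A.indicator fun _ => (1:ℝ) := by
    ext x; by_cases hx : x ∈ A <;> simp [hx]
  calc μ[A.indicator f | m] = μ[f * A.indicator (fun _ => (1:ℝ)) | m] := by rw [hAf]
    _ =ᵐ[μ] μ[μ[f * A.indicator (fun _ => (1:ℝ)) | mSup m f] | m] := h5
    _ =ᵐ[μ] μ[(μ⟦A | m⟧) * f | m] := condExp_congr_ae (h2.trans h3)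
    _ =ᵐ[μ] (μ⟦A | m⟧) * μ[f | m] := h4
    _ =ᵐ[μ] fun ω => (μ[f | m]) ω * (μ⟦A | m⟧) ω := by
      refine Filter.Eventually.of_forall fun ω => ?_
      simp [mul_comm]
/-- Theorem 3: bias of the doubly robust estimator when both models are misspecified:
`E[(T·Y − (T − e*(X))·μ1*(X))/e*(X)] − E[((1−T)·Y + (T − e*(X))·μ0*(X))/(1−e*(X))] − Δ
  = E[((e(X) − e*(X))·(μ1(X) − μ1*(X)))/e*(X)]
    + E[((e(X) − e*(X))·(μ0(X) − μ0*(X)))/(1 − e*(X))]`. -/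
theorem bias_dr
    {Ω : Type*} [MeasurableSpace Ω] [StandardBorelSpace Ω]
    {𝓧 : Type*} [MeasurableSpace 𝓧]
    (μ : Measure Ω) [IsProbabilityMeasure μ]
    (X : Ω → 𝓧) (hX : Measurable X)
    (T Y0 Y1 : Ω → ℝ)
    (hT01 : ∀ ω, T ω = 0 ∨ T ω = 1)
    (hY0int : Integrable Y0 μ) (hY1int : Integrable Y1 μ)
    (Y : Ω → ℝ) (hY : Y = fun ω => T ω * Y1 ω + (1 - T ω) * Y0 ω)
    -- no unmeasured confounding: Y(t) ⟂ T | σ(X), t = 0, 1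
    (hNUC0 : CondIndepFun (MeasurableSpace.comap X inferInstance) hX.comap_le Y0 T μ)
    (hNUC1 : CondIndepFun (MeasurableSpace.comap X inferInstance) hX.comap_le Y1 T μ)
    -- e(X): a version of P(T = 1 | σ(X)) = E[T | σ(X)]
    (eX : Ω → ℝ) (heX : eX =ᵐ[μ] μ[T | MeasurableSpace.comap X inferInstance])
    -- μt(X): versions of E[Y(t) | σ(X)], t = 0, 1
    (μ0X : Ω → ℝ) (hμ0X : μ0X =ᵐ[μ] μ[Y0 | MeasurableSpace.comap X inferInstance])
    (μ1X : Ω → ℝ) (hμ1X : μ1X =ᵐ[μ] μ[Y1 | MeasurableSpace.comap X inferInstance])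
    -- overlap for the true propensity score
    (η : ℝ) (hη : 0 < η)
    (hover : ∀ᵐ ω ∂μ, η < eX ω ∧ eX ω < 1 - η)
    -- misspecified propensity score e*(X) = g(X) and overlap under misspecification
    (g : 𝓧 → ℝ) (hg : Measurable g)
    (ν : ℝ) (hν : 0 < ν)
    (hover' : ∀ᵐ ω ∂μ, ν < g (X ω) ∧ g (X ω) < 1 - ν)
    -- misspecified outcome regression limits μt*(X) = ht(X), t = 0, 1
    (h0 h1 : 𝓧 → ℝ) (hh0 : Measurable h0) (hh1 : Measurable h1)
    -- integrability of the displayed functionals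
    (hint1 : Integrable
      (fun ω => (T ω * Y ω - (T ω - g (X ω)) * h1 (X ω)) / g (X ω)) μ)
    (hint2 : Integrable
      (fun ω => ((1 - T ω) * Y ω + (T ω - g (X ω)) * h0 (X ω)) / (1 - g (X ω))) μ)
    (hint3 : Integrable
      (fun ω => ((eX ω - g (X ω)) * (μ1X ω - h1 (X ω))) / g (X ω)) μ)
    (hint4 : Integrable
      (fun ω => ((eX ω - g (X ω)) * (μ0X ω - h0 (X ω))) / (1 - g (X ω))) μ) :
    (∫ ω, (T ω * Y ω - (T ω - g (X ω)) * h1 (X ω)) / g (X ω) ∂μ)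
        - (∫ ω, ((1 - T ω) * Y ω + (T ω - g (X ω)) * h0 (X ω)) / (1 - g (X ω)) ∂μ)
        - ((∫ ω, Y1 ω ∂μ) - ∫ ω, Y0 ω ∂μ)
      = (∫ ω, ((eX ω - g (X ω)) * (μ1X ω - h1 (X ω))) / g (X ω) ∂μ)
        + ∫ ω, ((eX ω - g (X ω)) * (μ0X ω - h0 (X ω))) / (1 - g (X ω)) ∂μ := by

  classical
  have hm' := hX.comap_le
  -- T is integrable (otherwise its conditional expectation is 0, contradicting overlap)
  by_cases hTint : Integrable T μ
  swap
  · exfalso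
    have h0 : μ[T | MeasurableSpace.comap X inferInstance] = 0 := condExp_of_not_integrable hTint
    have hbad : ∀ᵐ _ω ∂μ, False := by
      filter_upwards [heX, hover] with ω h1 h2
      rw [h0] at h1
      have : eX ω = 0 := by simpa using h1
      linarith [h2.1, hη]
    haveI : (MeasureTheory.ae μ).NeBot := ae_neBot.mpr (IsProbabilityMeasure.ne_zero μ)
    obtain ⟨ω, hω⟩ := hbad.exists
    exact hω
  -- measurable modifications of T, Y0, Y1
  have hTm := hTint.aestronglyMeasurable
  have hY0m := hY0int.aestronglyMeasurable
  have hY1m := hY1int.aestronglyMeasurable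
  set T' : Ω → ℝ := hTm.mk T with hT'def
  set Y0' : Ω → ℝ := hY0m.mk Y0 with hY0'def
  set Y1' : Ω → ℝ := hY1m.mk Y1 with hY1'def
  have hT'meas : Measurable T' := hTm.stronglyMeasurable_mk.measurable
  have hY0'meas : Measurable Y0' := hY0m.stronglyMeasurable_mk.measurable
  have hY1'meas : Measurable Y1' := hY1m.stronglyMeasurable_mk.measurable
  have hTae : T =ᵐ[μ] T' := hTm.ae_eq_mk
  have hY0ae : Y0 =ᵐ[μ] Y0' := hY0m.ae_eq_mk
  have hY1ae : Y1 =ᵐ[μ] Y1' := hY1m.ae_eq_mk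
  have hY0'int : Integrable Y0' μ := hY0int.congr hY0ae
  have hY1'int : Integrable Y1' μ := hY1int.congr hY1ae
  set A : Set Ω := T' ⁻¹' {1} with hAdef
  have hA : MeasurableSet A := hT'meas (measurableSet_singleton 1)
  have hAc : T' ⁻¹' ({1}ᶜ) = Aᶜ := rfl
  -- T is a.e. the indicator of A
  have hTiA : T =ᵐ[μ] A.indicator (fun _ => (1:ℝ)) := by
    filter_upwards [hTae] with ω h1
    by_cases hω : ω ∈ A
    · have hT'ω : T' ω = 1 := hω
      rw [Set.indicator_of_mem hω, h1, hT'ω]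
    · rcases hT01 ω with h | h
      · rw [Set.indicator_of_notMem hω, h]
      · exact absurd (show T' ω = 1 by rw [← h1, h]) hω
  have hTciA : (fun ω => 1 - T ω) =ᵐ[μ] Aᶜ.indicator (fun _ => (1:ℝ)) := by
    filter_upwards [hTiA] with ω h1
    by_cases hω : ω ∈ A
    · rw [h1, Set.indicator_of_mem hω, Set.indicator_of_notMem (by simpa using hω)]
      norm_num
    · rw [h1, Set.indicator_of_notMem hω, Set.indicator_of_mem (by simpa using hω)]
      norm_num
  -- conditional expectations related to A
  have hcondA : (μ⟦A | MeasurableSpace.comap X inferInstance⟧) =ᵐ[μ] eX :=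
    ((condExp_congr_ae hTiA).symm).trans heX.symm
  have hiAc_int : Integrable (Aᶜ.indicator fun _ => (1:ℝ)) μ :=
    (integrable_const (1:ℝ)).indicator hA.compl
  have hcondAc : (μ⟦Aᶜ | MeasurableSpace.comap X inferInstance⟧)
      =ᵐ[μ] fun ω => 1 - eX ω := by
    have h1 : (μ⟦Aᶜ | MeasurableSpace.comap X inferInstance⟧)
        =ᵐ[μ] μ[(fun ω => 1 - T ω) | MeasurableSpace.comap X inferInstance] :=
      (condExp_congr_ae hTciA).symm
    have h2 : (fun ω => 1 - T ω) = (fun _ => (1:ℝ)) - T := rfl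
    have h3 := condExp_sub (μ := μ) (m := MeasurableSpace.comap X inferInstance)
      (integrable_const (1:ℝ)) hTint
    have h4 : μ[(fun _ => (1:ℝ)) | MeasurableSpace.comap X inferInstance]
        = fun _ => (1:ℝ) := condExp_const hm' 1
    filter_upwards [h1, h3, heX] with ω hω1 hω3 hωe
    rw [hω1, h2, hω3, Pi.sub_apply, h4, ← hωe]
  have hcondY1' : μ[Y1' | MeasurableSpace.comap X inferInstance] =ᵐ[μ] μ1X :=
    ((condExp_congr_ae hY1ae).symm).trans hμ1X.symm
  have hcondY0' : μ[Y0' | MeasurableSpace.comap X inferInstance] =ᵐ[μ] μ0X :=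
    ((condExp_congr_ae hY0ae).symm).trans hμ0X.symm
  -- product conditional expectations via conditional independence
  have K1 : μ[(fun ω => T ω * Y1 ω) | MeasurableSpace.comap X inferInstance]
      =ᵐ[μ] fun ω => eX ω * μ1X ω := by
    have e1 : (fun ω => T ω * Y1 ω) =ᵐ[μ] A.indicator Y1' := by
      filter_upwards [hTae, hY1ae] with ω h1 h2
      by_cases hω : ω ∈ A
      · have hT'ω : T' ω = 1 := hω
        rw [Set.indicator_of_mem hω, h1, hT'ω, one_mul, h2]
      · rcases hT01 ω with h | h
        · rw [Set.indicator_of_notMem hω, h, zero_mul]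
        · exact absurd (show T' ω = 1 by rw [← h1, h]) hω
    have hB1 : ∀ s : Set ℝ, MeasurableSet s →
        (μ⟦Y1' ⁻¹' s ∩ A | MeasurableSpace.comap X inferInstance⟧)
          =ᵐ[μ] fun ω => (μ⟦Y1' ⁻¹' s | MeasurableSpace.comap X inferInstance⟧) ω
            * (μ⟦A | MeasurableSpace.comap X inferInstance⟧) ω :=
      fun s hs => aux_condIndep_sets hm' μ hNUC1 hY1'meas hT'meas hY1ae hTae hs
        (measurableSet_singleton 1)
    calc μ[(fun ω => T ω * Y1 ω) | MeasurableSpace.comap X inferInstance]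
        =ᵐ[μ] μ[A.indicator Y1' | MeasurableSpace.comap X inferInstance] :=
          condExp_congr_ae e1
      _ =ᵐ[μ] fun ω => (μ[Y1' | MeasurableSpace.comap X inferInstance]) ω
            * (μ⟦A | MeasurableSpace.comap X inferInstance⟧) ω :=
          aux_condExp_indicator_mul hm' μ hY1'meas hY1'int hA hB1
      _ =ᵐ[μ] fun ω => eX ω * μ1X ω := by
          filter_upwards [hcondY1', hcondA] with ω h1 h2
          rw [h1, h2, mul_comm]
  have K0 : μ[(fun ω => (1 - T ω) * Y0 ω) | MeasurableSpace.comap X inferInstance]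
      =ᵐ[μ] fun ω => (1 - eX ω) * μ0X ω := by
    have e0 : (fun ω => (1 - T ω) * Y0 ω) =ᵐ[μ] Aᶜ.indicator Y0' := by
      filter_upwards [hTciA, hY0ae] with ω h1 h2
      by_cases hω : ω ∈ Aᶜ
      · rw [Set.indicator_of_mem hω, h1, Set.indicator_of_mem hω, one_mul, h2]
      · rw [Set.indicator_of_notMem hω, h1, Set.indicator_of_notMem hω, zero_mul]
    have hB0 : ∀ s : Set ℝ, MeasurableSet s →
        (μ⟦Y0' ⁻¹' s ∩ Aᶜ | MeasurableSpace.comap X inferInstance⟧)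
          =ᵐ[μ] fun ω => (μ⟦Y0' ⁻¹' s | MeasurableSpace.comap X inferInstance⟧) ω
            * (μ⟦Aᶜ | MeasurableSpace.comap X inferInstance⟧) ω := by
      intro s hs
      have := aux_condIndep_sets hm' μ hNUC0 hY0'meas hT'meas hY0ae hTae hs
        (measurableSet_singleton 1).compl
      rwa [hAc] at this
    calc μ[(fun ω => (1 - T ω) * Y0 ω) | MeasurableSpace.comap X inferInstance]
        =ᵐ[μ] μ[Aᶜ.indicator Y0' | MeasurableSpace.comap X inferInstance] :=
          condExp_congr_ae e0
      _ =ᵐ[μ] fun ω => (μ[Y0' | MeasurableSpace.comap X inferInstance]) ω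
            * (μ⟦Aᶜ | MeasurableSpace.comap X inferInstance⟧) ω :=
          aux_condExp_indicator_mul hm' μ hY0'meas hY0'int hA.compl hB0
      _ =ᵐ[μ] fun ω => (1 - eX ω) * μ0X ω := by
          filter_upwards [hcondY0', hcondAc] with ω h1 h2
          rw [h1, h2, mul_comm]
  -- measurability over the sub-σ-algebra
  have hgXm' : Measurable[MeasurableSpace.comap X inferInstance] (fun ω => g (X ω)) :=
    fun s hs => ⟨g ⁻¹' s, hg hs, rfl⟩
  have hh1Xm' : Measurable[MeasurableSpace.comap X inferInstance] (fun ω => h1 (X ω)) :=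
    fun s hs => ⟨h1 ⁻¹' s, hh1 hs, rfl⟩
  have hh0Xm' : Measurable[MeasurableSpace.comap X inferInstance] (fun ω => h0 (X ω)) :=
    fun s hs => ⟨h0 ⁻¹' s, hh0 hs, rfl⟩
  -- integrability of g ∘ X
  have int_gX : Integrable (fun ω => g (X ω)) μ := by
    refine Integrable.mono' (integrable_const (1:ℝ)) (hg.comp hX).aestronglyMeasurable ?_
    filter_upwards [hover'] with ω hω
    rw [Real.norm_eq_abs, abs_le]
    constructor <;> nlinarith [hω.1, hω.2, hν]
  have int_q : Integrable (fun ω => T ω - g (X ω)) μ := hTint.sub int_gX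
  -- abbreviations
  set w1 : Ω → ℝ := fun ω => (g (X ω))⁻¹ with hw1
  set p1 : Ω → ℝ := fun ω => T ω * Y1 ω with hp1
  set u1 : Ω → ℝ := fun ω => h1 (X ω) * (g (X ω))⁻¹ with hu1
  set w0 : Ω → ℝ := fun ω => (1 - g (X ω))⁻¹ with hw0
  set p0 : Ω → ℝ := fun ω => (1 - T ω) * Y0 ω with hp0
  set u0 : Ω → ℝ := fun ω => h0 (X ω) * (1 - g (X ω))⁻¹ with hu0
  set q : Ω → ℝ := fun ω => T ω - g (X ω) with hq
  have hw1sm : StronglyMeasurable[MeasurableSpace.comap X inferInstance] w1 :=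
    hgXm'.inv.stronglyMeasurable
  have hu1sm : StronglyMeasurable[MeasurableSpace.comap X inferInstance] u1 :=
    (hh1Xm'.mul hgXm'.inv).stronglyMeasurable
  have hw0sm : StronglyMeasurable[MeasurableSpace.comap X inferInstance] w0 :=
    ((measurable_const.sub hgXm').inv).stronglyMeasurable
  have hu0sm : StronglyMeasurable[MeasurableSpace.comap X inferInstance] u0 :=
    (hh0Xm'.mul (measurable_const.sub hgXm').inv).stronglyMeasurable
  -- integrability of the pieces
  have int_p1 : Integrable p1 μ := by
    refine Integrable.mono' hY1int.abs (hTm.mul hY1m) ?_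
    refine Filter.Eventually.of_forall fun ω => ?_
    rw [Real.norm_eq_abs, hp1]
    rcases hT01 ω with h | h <;> simp [h, abs_nonneg]
  have int_p0 : Integrable p0 μ := by
    refine Integrable.mono' hY0int.abs ((aestronglyMeasurable_const.sub hTm).mul hY0m) ?_
    refine Filter.Eventually.of_forall fun ω => ?_
    rw [Real.norm_eq_abs, hp0]
    rcases hT01 ω with h | h <;> simp [h, abs_nonneg]
  have int_p1w : Integrable (fun ω => w1 ω * p1 ω) μ := by
    refine Integrable.mono' (int_p1.abs.const_mul ν⁻¹)
      ((hg.comp hX).inv.aestronglyMeasurable.mul int_p1.aestronglyMeasurable) ?_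
    filter_upwards [hover'] with ω hω
    have hgpos : 0 < g (X ω) := lt_trans hν hω.1
    rw [Real.norm_eq_abs, abs_mul, hw1]
    have h1 : |(g (X ω))⁻¹| ≤ ν⁻¹ := by
      rw [abs_of_pos (inv_pos.mpr hgpos)]
      exact inv_anti₀ hν hω.1.le
    exact mul_le_mul_of_nonneg_right h1 (abs_nonneg _)
  have int_p0w : Integrable (fun ω => w0 ω * p0 ω) μ := by
    refine Integrable.mono' (int_p0.abs.const_mul ν⁻¹)
      ((measurable_const.sub (hg.comp hX)).inv.aestronglyMeasurable.mul
        int_p0.aestronglyMeasurable) ?_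
    filter_upwards [hover'] with ω hω
    have hgpos : 0 < 1 - g (X ω) := by linarith [hω.2, hν]
    have hgν : ν ≤ 1 - g (X ω) := by linarith [hω.2]
    rw [Real.norm_eq_abs, abs_mul, hw0]
    have h1 : |(1 - g (X ω))⁻¹| ≤ ν⁻¹ := by
      rw [abs_of_pos (inv_pos.mpr hgpos)]
      exact inv_anti₀ hν hgν
    exact mul_le_mul_of_nonneg_right h1 (abs_nonneg _)
  -- pointwise rewriting of the two DR integrands
  have hF1eq : (fun ω => (T ω * Y ω - (T ω - g (X ω)) * h1 (X ω)) / g (X ω))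
      = fun ω => w1 ω * p1 ω - u1 ω * q ω := by
    funext ω
    simp only [hY, hw1, hp1, hu1, hq]
    rcases hT01 ω with h | h <;> rw [h] <;> ring
  have hF2eq : (fun ω => ((1 - T ω) * Y ω + (T ω - g (X ω)) * h0 (X ω)) / (1 - g (X ω)))
      = fun ω => w0 ω * p0 ω + u0 ω * q ω := by
    funext ω
    simp only [hY, hw0, hp0, hu0, hq]
    rcases hT01 ω with h | h <;> rw [h] <;> ring
  have int_G1 : Integrable (fun ω => w1 ω * p1 ω - u1 ω * q ω) μ := hF1eq ▸ hint1
  have int_G2 : Integrable (fun ω => w0 ω * p0 ω + u0 ω * q ω) μ := hF2eq ▸ hint2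
  have int_v1 : Integrable (fun ω => u1 ω * q ω) μ := by
    refine (int_p1w.sub int_G1).congr (Filter.Eventually.of_forall fun ω => ?_)
    simp only [Pi.sub_apply]
    ring
  have int_v0 : Integrable (fun ω => u0 ω * q ω) μ := by
    refine (int_G2.sub int_p0w).congr (Filter.Eventually.of_forall fun ω => ?_)
    simp only [Pi.sub_apply]
    ring
  -- conditional expectation of q
  have hgXce : μ[(fun ω => g (X ω)) | MeasurableSpace.comap X inferInstance]
      = fun ω => g (X ω) :=
    condExp_of_stronglyMeasurable hm' hgXm'.stronglyMeasurable int_gX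
  have c_q : μ[q | MeasurableSpace.comap X inferInstance]
      =ᵐ[μ] fun ω => eX ω - g (X ω) := by
    have hsub := condExp_sub (μ := μ) (m := MeasurableSpace.comap X inferInstance)
      (f := T) (g := fun ω => g (X ω)) hTint int_gX
    rw [show (T - fun ω => g (X ω)) = q from rfl] at hsub
    filter_upwards [hsub, heX] with ω h1 h2
    rw [h1, Pi.sub_apply, hgXce, ← h2]
  -- conditional expectations of the products
  have c_p1w : μ[(fun ω => w1 ω * p1 ω) | MeasurableSpace.comap X inferInstance]
      =ᵐ[μ] fun ω => w1 ω * (eX ω * μ1X ω) := by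
    have hmul := condExp_mul_of_stronglyMeasurable_left hw1sm
      (show Integrable (w1 * p1) μ from int_p1w) int_p1
    rw [show w1 * p1 = fun ω => w1 ω * p1 ω from rfl] at hmul
    filter_upwards [hmul, K1] with ω hω1 hω2
    rw [hω1, Pi.mul_apply, hω2]
  have c_v1 : μ[(fun ω => u1 ω * q ω) | MeasurableSpace.comap X inferInstance]
      =ᵐ[μ] fun ω => u1 ω * (eX ω - g (X ω)) := by
    have hmul := condExp_mul_of_stronglyMeasurable_left hu1sm
      (show Integrable (u1 * q) μ from int_v1) int_q
    rw [show u1 * q = fun ω => u1 ω * q ω from rfl] at hmul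
    filter_upwards [hmul, c_q] with ω hω1 hω2
    rw [hω1, Pi.mul_apply, hω2]
  have c_p0w : μ[(fun ω => w0 ω * p0 ω) | MeasurableSpace.comap X inferInstance]
      =ᵐ[μ] fun ω => w0 ω * ((1 - eX ω) * μ0X ω) := by
    have hmul := condExp_mul_of_stronglyMeasurable_left hw0sm
      (show Integrable (w0 * p0) μ from int_p0w) int_p0
    rw [show w0 * p0 = fun ω => w0 ω * p0 ω from rfl] at hmul
    filter_upwards [hmul, K0] with ω hω1 hω2
    rw [hω1, Pi.mul_apply, hω2]
  have c_v0 : μ[(fun ω => u0 ω * q ω) | MeasurableSpace.comap X inferInstance]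
      =ᵐ[μ] fun ω => u0 ω * (eX ω - g (X ω)) := by
    have hmul := condExp_mul_of_stronglyMeasurable_left hu0sm
      (show Integrable (u0 * q) μ from int_v0) int_q
    rw [show u0 * q = fun ω => u0 ω * q ω from rfl] at hmul
    filter_upwards [hmul, c_q] with ω hω1 hω2
    rw [hω1, Pi.mul_apply, hω2]
  -- conditional expectations of the full integrands
  have hcond1 : μ[(fun ω => w1 ω * p1 ω - u1 ω * q ω) | MeasurableSpace.comap X inferInstance]
      =ᵐ[μ] fun ω => w1 ω * (eX ω * μ1X ω) - u1 ω * (eX ω - g (X ω)) := by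
    have hsub := condExp_sub (μ := μ) (m := MeasurableSpace.comap X inferInstance)
      int_p1w int_v1
    rw [show ((fun ω => w1 ω * p1 ω) - fun ω => u1 ω * q ω)
      = fun ω => w1 ω * p1 ω - u1 ω * q ω from rfl] at hsub
    filter_upwards [hsub, c_p1w, c_v1] with ω h1 h2 h3
    rw [h1, Pi.sub_apply, h2, h3]
  have hcond2 : μ[(fun ω => w0 ω * p0 ω + u0 ω * q ω) | MeasurableSpace.comap X inferInstance]
      =ᵐ[μ] fun ω => w0 ω * ((1 - eX ω) * μ0X ω) + u0 ω * (eX ω - g (X ω)) := by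
    have hadd := condExp_add (μ := μ) (m := MeasurableSpace.comap X inferInstance)
      int_p0w int_v0
    rw [show ((fun ω => w0 ω * p0 ω) + fun ω => u0 ω * q ω)
      = fun ω => w0 ω * p0 ω + u0 ω * q ω from rfl] at hadd
    filter_upwards [hadd, c_p0w, c_v0] with ω h1 h2 h3
    rw [h1, Pi.add_apply, h2, h3]
  -- integrability of μtX
  have int_μ1X : Integrable μ1X μ := integrable_condExp.congr hμ1X.symm
  have int_μ0X : Integrable μ0X μ := integrable_condExp.congr hμ0X.symm
  -- the two integral identities
  have hI1 : ∫ ω, (T ω * Y ω - (T ω - g (X ω)) * h1 (X ω)) / g (X ω) ∂μ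
      = (∫ ω, Y1 ω ∂μ)
        + ∫ ω, (eX ω - g (X ω)) * (μ1X ω - h1 (X ω)) / g (X ω) ∂μ := by
    rw [hF1eq, ← integral_condExp hm' (f := fun ω => w1 ω * p1 ω - u1 ω * q ω),
      integral_congr_ae hcond1]
    have e2 : (fun ω => w1 ω * (eX ω * μ1X ω) - u1 ω * (eX ω - g (X ω)))
        =ᵐ[μ] fun ω => μ1X ω + (eX ω - g (X ω)) * (μ1X ω - h1 (X ω)) / g (X ω) := by
      filter_upwards [hover'] with ω hω
      have hg0 : g (X ω) ≠ 0 := ne_of_gt (lt_trans hν hω.1)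
      rw [hw1, hu1]
      field_simp
      ring
    rw [integral_congr_ae e2, integral_add int_μ1X hint3]
    congr 1
    rw [integral_congr_ae hμ1X, integral_condExp hm']
  have hI2 : ∫ ω, ((1 - T ω) * Y ω + (T ω - g (X ω)) * h0 (X ω)) / (1 - g (X ω)) ∂μ
      = (∫ ω, Y0 ω ∂μ)
        - ∫ ω, (eX ω - g (X ω)) * (μ0X ω - h0 (X ω)) / (1 - g (X ω)) ∂μ := by
    rw [hF2eq, ← integral_condExp hm' (f := fun ω => w0 ω * p0 ω + u0 ω * q ω),
      integral_congr_ae hcond2]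
    have e2 : (fun ω => w0 ω * ((1 - eX ω) * μ0X ω) + u0 ω * (eX ω - g (X ω)))
        =ᵐ[μ] fun ω => μ0X ω - (eX ω - g (X ω)) * (μ0X ω - h0 (X ω)) / (1 - g (X ω)) := by
      filter_upwards [hover'] with ω hω
      have hg0 : 1 - g (X ω) ≠ 0 := by
        have : g (X ω) < 1 := by linarith [hω.2, hν]
        linarith
      rw [hw0, hu0]
      field_simp
      ring
    rw [integral_congr_ae e2, integral_sub int_μ0X hint4]
    congr 1
    rw [integral_congr_ae hμ0X, integral_condExp hm']
  rw [hI1, hI2]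
  ring
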